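/- The number of parameters in Arnold's miniversal deformation of a single-eigenvalue Jordan matrix J(λ) = J_{n_1}(λ) ⊕ ... ⊕ J_{n_l}(λ) equals Σ_{i,j} min(n_i, n_j), which equals the dimension of the centralizer of J(λ) in the algebra of matrices: dim{X : X J(λ) = J(λ) X} = Σ_{i,j} min(n_i,n_j). -/

import Mathlib

open Matrix

/-- The n×n upper-triangular Jordan block with eigenvalue `lam`. -/
def jordanBlock (n : ℕ) (lam : ℂ) : Matrix (Fin n) (Fin n) ℂ :=
  Matrix.of fun i j => if (i : ℕ) = j then lam else if (i : ℕ) + 1 = j then 1 else 0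

/-- The Jordan matrix J(λ) = J_{n 0}(λ) ⊕ ... ⊕ J_{n (l-1)}(λ). -/
def jordanMatrix {l : ℕ} (n : Fin l → ℕ) (lam : ℂ) :
    Matrix ((i : Fin l) × Fin (n i)) ((i : Fin l) × Fin (n i)) ℂ :=
  Matrix.blockDiagonal' (fun i => jordanBlock (n i) lam)

/-- The Weyr matrix with diagonal blocks `lam • I_{s i}` and superdiagonal blocks
`[I_{s (i+1)}; 0]` of size `s i × s (i+1)`. -/
def weyrMatrix {k : ℕ} (s : Fin k → ℕ) (lam : ℂ) :
    Matrix ((i : Fin k) × Fin (s i)) ((i : Fin k) × Fin (s i)) ℂ :=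
  Matrix.of fun p q =>
    if (p.1 : ℕ) = q.1 ∧ (p.2 : ℕ) = q.2 then lam
    else if (p.1 : ℕ) + 1 = q.1 ∧ (p.2 : ℕ) = q.2 then 1 else 0

/-- The Weyr characteristic (conjugate partition): `weyrChar n i = #{j : n j ≥ i+1}`,
0-indexed (so `weyrChar n (i-1)` is `s_i` of the paper). -/
def weyrChar {l : ℕ} (n : Fin l → ℕ) (i : ℕ) : ℕ :=
  (Finset.univ.filter (fun j : Fin l => i + 1 ≤ n j)).card

namespace CentralizerAux

/-- The single-block commutation operator on rectangular matrices. -/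
noncomputable def Tmap (m n : ℕ) (lam : ℂ) : Matrix (Fin m) (Fin n) ℂ →ₗ[ℂ] Matrix (Fin m) (Fin n) ℂ where
  toFun X := X * jordanBlock n lam - jordanBlock m lam * X
  map_add' X Y := by simp [Matrix.add_mul, Matrix.mul_add]; abel
  map_smul' c X := by simp [Matrix.smul_mul, Matrix.mul_smul, smul_sub]

lemma mul_jordan_apply {m n : ℕ} (lam : ℂ) (X : Matrix (Fin m) (Fin n) ℂ)
    (a : Fin m) (b : Fin n) :
    (X * jordanBlock n lam) a b =
      lam * X a b + if h : 1 ≤ (b : ℕ) then X a ⟨(b : ℕ) - 1, by omega⟩ else 0 := by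
  rw [Matrix.mul_apply]
  by_cases hb : 1 ≤ (b : ℕ)
  · rw [dif_pos hb]
    rw [Fintype.sum_eq_add b ⟨(b : ℕ) - 1, by omega⟩ (by simp [Fin.ext_iff]; omega) ?_]
    · simp only [jordanBlock, of_apply, if_true]
      rw [if_neg (by omega), if_pos (by omega)]
      ring
    · intro x hx
      simp only [jordanBlock, of_apply]
      rw [if_neg, if_neg]
      · ring
      · simp [Fin.ext_iff] at hx; omega
      · simp [Fin.ext_iff] at hx; omega
  · rw [dif_neg hb]
    rw [Fintype.sum_eq_single b ?_]
    · simp only [jordanBlock, of_apply, if_true]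
      ring
    · intro x hx
      simp only [jordanBlock, of_apply]
      rw [if_neg, if_neg]
      · ring
      · simp [Fin.ext_iff] at hx ⊢; omega
      · simp [Fin.ext_iff] at hx; omega

lemma jordan_mul_apply {m n : ℕ} (lam : ℂ) (X : Matrix (Fin m) (Fin n) ℂ)
    (a : Fin m) (b : Fin n) :
    (jordanBlock m lam * X) a b =
      lam * X a b + if h : (a : ℕ) + 1 < m then X ⟨(a : ℕ) + 1, h⟩ b else 0 := by
  rw [Matrix.mul_apply]
  by_cases ha : (a : ℕ) + 1 < m
  · rw [dif_pos ha]
    rw [Fintype.sum_eq_add a ⟨(a : ℕ) + 1, ha⟩ (by simp [Fin.ext_iff]) ?_]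
    · simp only [jordanBlock, of_apply, if_true]
      rw [if_neg (by omega)]
      ring
    · intro x hx
      simp only [jordanBlock, of_apply]
      rw [if_neg, if_neg]
      · ring
      · simp [Fin.ext_iff] at hx ⊢; omega
      · simp [Fin.ext_iff] at hx ⊢; omega
  · rw [dif_neg ha]
    rw [Fintype.sum_eq_single a ?_]
    · simp only [jordanBlock, of_apply, if_true]
      ring
    · intro x hx
      simp only [jordanBlock, of_apply]
      rw [if_neg, if_neg]
      · ring
      · simp [Fin.ext_iff] at hx ⊢; omega
      · simp [Fin.ext_iff] at hx ⊢; omega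

/-- The commutation condition, entrywise with natural-number indices. -/
def Comm (m n : ℕ) (X : Matrix (Fin m) (Fin n) ℂ) : Prop :=
  ∀ (a b : ℕ) (ha : a < m) (hb : b < n),
    (if h : 1 ≤ b then X ⟨a, ha⟩ ⟨b - 1, by omega⟩ else 0) =
    (if h : a + 1 < m then X ⟨a + 1, h⟩ ⟨b, hb⟩ else 0)

lemma mem_ker_iff {m n : ℕ} (lam : ℂ) (X : Matrix (Fin m) (Fin n) ℂ) :
    X ∈ LinearMap.ker (Tmap m n lam) ↔ Comm m n X := by
  constructor
  · intro hX a b ha hb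
    have h : (X * jordanBlock n lam) ⟨a, ha⟩ ⟨b, hb⟩
        = (jordanBlock m lam * X) ⟨a, ha⟩ ⟨b, hb⟩ := by
      have : X * jordanBlock n lam - jordanBlock m lam * X = 0 := hX
      have := congrFun (congrFun (congrArg (fun M => (M : Matrix _ _ ℂ)) this) ⟨a, ha⟩) ⟨b, hb⟩
      simpa [sub_eq_zero] using this
    rw [mul_jordan_apply, jordan_mul_apply] at h
    exact add_left_cancel h
  · intro hX
    have : X * jordanBlock n lam = jordanBlock m lam * X := by
      ext a b
      rw [mul_jordan_apply, jordan_mul_apply]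
      congr 1
      exact hX a b a.isLt b.isLt
    simp only [LinearMap.mem_ker, Tmap, LinearMap.coe_mk, AddHom.coe_mk, this, sub_self]

section Comm

variable {m n : ℕ} {X : Matrix (Fin m) (Fin n) ℂ}

lemma Xcongr (X : Matrix (Fin m) (Fin n) ℂ) {a a' b b' : ℕ} (ha : a < m) (ha' : a' < m)
    (hb : b < n) (hb' : b' < n) (e1 : a = a') (e2 : b = b') :
    X ⟨a, ha⟩ ⟨b, hb⟩ = X ⟨a', ha'⟩ ⟨b', hb'⟩ := by subst e1; subst e2; rfl

lemma comm_shift (hX : Comm m n X) {a b : ℕ} (ha : a + 1 < m) (hb : b + 1 < n) :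
    X ⟨a + 1, ha⟩ ⟨b + 1, hb⟩ = X ⟨a, by omega⟩ ⟨b, by omega⟩ := by
  have := hX a (b + 1) (by omega) hb
  rw [dif_pos (by omega), dif_pos ha] at this
  rw [← this]
  exact Xcongr X _ _ _ _ rfl (by omega)

lemma comm_zero_lower (hX : Comm m n X) :
    ∀ b a (ha : a < m) (hb : b < n), b < a → X ⟨a, ha⟩ ⟨b, hb⟩ = 0 := by
  intro b
  induction b with
  | zero =>
    intro a ha hb hba
    have := hX (a - 1) 0 (by omega) hb
    rw [dif_neg (by omega), dif_pos (by omega)] at this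
    rw [Xcongr X ha (by omega : a - 1 + 1 < m) hb hb (by omega) rfl]
    exact this.symm
  | succ b ih =>
    intro a ha hb hba
    have := hX (a - 1) (b + 1) (by omega) hb
    rw [dif_pos (by omega), dif_pos (by omega)] at this
    rw [Xcongr X ha (by omega : a - 1 + 1 < m) hb hb (by omega) rfl]
    rw [← this]
    rw [Xcongr X (by omega : a - 1 < m) (by omega) (by omega : b + 1 - 1 < n) (by omega : b < n) rfl (by omega)]
    exact ih (a - 1) (by omega) (by omega) (by omega)

lemma comm_zero_right (hX : Comm m n X) :
    ∀ k a b (ha : a < m) (hb : b < n), m - a ≤ k + 1 → b + m < n + a → X ⟨a, ha⟩ ⟨b, hb⟩ = 0 := by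
  intro k
  induction k with
  | zero =>
    intro a b ha hb hk hbm
    have := hX a (b + 1) ha (by omega)
    rw [dif_pos (by omega), dif_neg (by omega)] at this
    rw [Xcongr X ha ha hb (by omega : b + 1 - 1 < n) rfl (by omega)]
    exact this
  | succ k ih =>
    intro a b ha hb hk hbm
    by_cases hlast : a + 1 < m
    · rw [← comm_shift hX hlast (by omega : b + 1 < n)]
      exact ih (a + 1) (b + 1) hlast (by omega) (by omega) (by omega)
    · have := hX a (b + 1) ha (by omega)
      rw [dif_pos (by omega), dif_neg (by omega)] at this
      rw [Xcongr X ha ha hb (by omega : b + 1 - 1 < n) rfl (by omega)]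
      exact this

lemma comm_diag (hX : Comm m n X) :
    ∀ a b (ha : a < m) (hb : b < n), a ≤ b →
      X ⟨a, ha⟩ ⟨b, hb⟩ = X ⟨0, by omega⟩ ⟨b - a, by omega⟩ := by
  intro a
  induction a with
  | zero =>
    intro b ha hb hab
    exact Xcongr X ha (by omega) hb (by omega) rfl (by omega)
  | succ a ih =>
    intro b ha hb hab
    have := hX a b (by omega) hb
    rw [dif_pos (by omega), dif_pos ha] at this
    rw [← this, ih (b - 1) (by omega) (by omega) (by omega)]
    exact Xcongr X _ _ _ _ rfl (by omega)

end Comm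

/-- The parametrization of the kernel by `min m n` free parameters. -/
noncomputable def Gmap (m n : ℕ) : (Fin (min m n) → ℂ) →ₗ[ℂ] Matrix (Fin m) (Fin n) ℂ where
  toFun c := Matrix.of fun a b =>
    if h : (a : ℕ) + (n - min m n) ≤ (b : ℕ) then
      c ⟨(b : ℕ) - a - (n - min m n), by have := b.isLt; omega⟩
    else 0
  map_add' c d := by
    ext a b
    simp only [of_apply, Matrix.add_apply, Pi.add_apply]
    split_ifs <;> simp
  map_smul' r c := by
    ext a b
    simp only [of_apply, Matrix.smul_apply, Pi.smul_apply, RingHom.id_apply]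
    split_ifs <;> simp

lemma Gmap_comm (m n : ℕ) (c : Fin (min m n) → ℂ) : Comm m n (Gmap m n c) := by
  intro a b ha hb
  simp only [Gmap, LinearMap.coe_mk, AddHom.coe_mk, of_apply]
  by_cases h1 : 1 ≤ b
  · rw [dif_pos h1]
    by_cases h2 : a + (n - min m n) ≤ b - 1
    · rw [dif_pos (by simpa using h2)]
      rw [dif_pos (by omega), dif_pos (by omega)]
      congr 1
      simp [Fin.ext_iff]
      omega
    · rw [dif_neg (by simpa using h2)]
      by_cases h3 : a + 1 < m
      · rw [dif_pos h3, dif_neg (by simpa using (by omega : ¬ (a + 1 + (n - min m n) ≤ b)))]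
      · rw [dif_neg h3]
  · rw [dif_neg h1]
    by_cases h3 : a + 1 < m
    · rw [dif_pos h3, dif_neg (by simpa using (by omega : ¬ (a + 1 + (n - min m n) ≤ b)))]
    · rw [dif_neg h3]

noncomputable def kerEquiv (m n : ℕ) (hm : 1 ≤ m) (hn : 1 ≤ n) (lam : ℂ) :
    LinearMap.ker (Tmap m n lam) ≃ₗ[ℂ] (Fin (min m n) → ℂ) := by
  refine LinearEquiv.ofLinear
    { toFun := fun X k => X.1 ⟨0, by omega⟩ ⟨n - min m n + k, by have := k.isLt; omega⟩
      map_add' := fun X Y => rfl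
      map_smul' := fun r X => rfl }
    (LinearMap.codRestrict _ (Gmap m n) fun c => (mem_ker_iff lam _).2 (Gmap_comm m n c))
    ?_ ?_
  · refine LinearMap.ext fun c => funext fun k => ?_
    change (Gmap m n c) ⟨0, by omega⟩ ⟨n - min m n + k, by have := k.isLt; omega⟩ = c k
    simp only [LinearMap.coe_comp, Function.comp_apply, LinearMap.codRestrict_apply,
      LinearMap.coe_mk, AddHom.coe_mk, LinearMap.id_coe, id_eq, Gmap, of_apply]
    rw [dif_pos (by omega)]
    congr 1
    simp [Fin.ext_iff]
  · ext X a b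
    have hX : Comm m n X.1 := (mem_ker_iff lam _).1 X.2
    simp only [LinearMap.coe_comp, Function.comp_apply, LinearMap.codRestrict_apply,
      LinearMap.coe_mk, AddHom.coe_mk, LinearMap.id_coe, id_eq, Gmap, of_apply,
      Submodule.coe_subtype]
    by_cases h : (a : ℕ) + (n - min m n) ≤ (b : ℕ)
    · rw [dif_pos h]
      have h1 : X.1 a b = X.1 ⟨0, by omega⟩ ⟨(b : ℕ) - a, by have := b.isLt; omega⟩ := by
        rw [← comm_diag hX a b a.isLt b.isLt (by omega)]
      rw [h1]
      exact (Xcongr X.1 _ _ _ _ rfl (by simp only [Fin.val_mk]; omega)).symm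
    · rw [dif_neg h]
      by_cases hlow : (b : ℕ) < (a : ℕ)
      · exact (comm_zero_lower hX b a a.isLt b.isLt hlow).symm
      · refine (comm_zero_right hX (m - 1) a b a.isLt b.isLt (by omega) ?_).symm
        have := a.isLt; have := b.isLt
        omega

lemma finrank_ker_Tmap (m n : ℕ) (hm : 1 ≤ m) (hn : 1 ≤ n) (lam : ℂ) :
    Module.finrank ℂ (LinearMap.ker (Tmap m n lam)) = min m n := by
  rw [(kerEquiv m n hm hn lam).finrank_eq]
  simp [Module.finrank_fintype_fun_eq_card]




section Blocks

variable {l : ℕ} (n : Fin l → ℕ) (lam : ℂ)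

/-- Extracting the (i,j) block of a sigma-indexed matrix. -/
def blockOf (i j : Fin l) :
    Matrix ((i : Fin l) × Fin (n i)) ((i : Fin l) × Fin (n i)) ℂ →ₗ[ℂ]
      Matrix (Fin (n i)) (Fin (n j)) ℂ where
  toFun X := Matrix.of fun a b => X ⟨i, a⟩ ⟨j, b⟩
  map_add' _ _ := rfl
  map_smul' _ _ := rfl

lemma mul_jordanMatrix_apply (X : Matrix ((i : Fin l) × Fin (n i)) ((i : Fin l) × Fin (n i)) ℂ)
    (p : (i : Fin l) × Fin (n i)) (j : Fin l) (b : Fin (n j)) :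
    (X * jordanMatrix n lam) p ⟨j, b⟩ =
      ∑ b', X p ⟨j, b'⟩ * jordanBlock (n j) lam b' b := by
  rw [Matrix.mul_apply, ← Finset.univ_sigma_univ, Finset.sum_sigma]
  rw [Fintype.sum_eq_single j ?_]
  · apply Finset.sum_congr rfl
    intro b' _
    rw [jordanMatrix, Matrix.blockDiagonal'_apply_eq]
  · intro i' hi'
    apply Finset.sum_eq_zero
    intro b' _
    rw [jordanMatrix, Matrix.blockDiagonal'_apply_ne _ _ _ hi', mul_zero]

lemma jordanMatrix_mul_apply (X : Matrix ((i : Fin l) × Fin (n i)) ((i : Fin l) × Fin (n i)) ℂ)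
    (i : Fin l) (a : Fin (n i)) (q : (i : Fin l) × Fin (n i)) :
    (jordanMatrix n lam * X) ⟨i, a⟩ q =
      ∑ a', jordanBlock (n i) lam a a' * X ⟨i, a'⟩ q := by
  rw [Matrix.mul_apply, ← Finset.univ_sigma_univ, Finset.sum_sigma]
  rw [Fintype.sum_eq_single i ?_]
  · apply Finset.sum_congr rfl
    intro a' _
    rw [jordanMatrix, Matrix.blockDiagonal'_apply_eq]
  · intro i' hi'
    apply Finset.sum_eq_zero
    intro a' _
    rw [jordanMatrix, Matrix.blockDiagonal'_apply_ne _ _ _ (Ne.symm hi'), zero_mul]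

lemma mem_ker_big_iff (X : Matrix ((i : Fin l) × Fin (n i)) ((i : Fin l) × Fin (n i)) ℂ) :
    X ∈ LinearMap.ker
        (LinearMap.mulRight ℂ (jordanMatrix n lam) - LinearMap.mulLeft ℂ (jordanMatrix n lam)) ↔
      ∀ i j, blockOf n i j X ∈ LinearMap.ker (Tmap (n i) (n j) lam) := by
  have key : ∀ (i j : Fin l) (a : Fin (n i)) (b : Fin (n j)),
      (X * jordanMatrix n lam - jordanMatrix n lam * X) ⟨i, a⟩ ⟨j, b⟩ =
        (blockOf n i j X * jordanBlock (n j) lam - jordanBlock (n i) lam * blockOf n i j X) a b := by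
    intro i j a b
    simp only [Matrix.sub_apply]
    rw [mul_jordanMatrix_apply, jordanMatrix_mul_apply]
    simp only [Matrix.mul_apply, blockOf, LinearMap.coe_mk, AddHom.coe_mk, of_apply]
    rfl
  constructor
  · intro hX i j
    simp only [LinearMap.mem_ker, Tmap, LinearMap.coe_mk, AddHom.coe_mk]
    ext a b
    rw [← key i j a b]
    have : X * jordanMatrix n lam - jordanMatrix n lam * X = 0 := by
      simpa [LinearMap.sub_apply] using hX
    rw [this]
    rfl
  · intro hX
    simp only [LinearMap.mem_ker, LinearMap.sub_apply, LinearMap.mulRight_apply,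
      LinearMap.mulLeft_apply]
    ext p q
    obtain ⟨i, a⟩ := p
    obtain ⟨j, b⟩ := q
    rw [Matrix.zero_apply, key i j a b]
    have := hX i j
    simp only [LinearMap.mem_ker, Tmap, LinearMap.coe_mk, AddHom.coe_mk] at this
    rw [this, Matrix.zero_apply]

/-- Assembling blocks into a sigma-indexed matrix. -/
def assemble :
    ((i : Fin l) → (j : Fin l) → Matrix (Fin (n i)) (Fin (n j)) ℂ) →ₗ[ℂ]
      Matrix ((i : Fin l) × Fin (n i)) ((i : Fin l) × Fin (n i)) ℂ where
  toFun f := Matrix.of fun p q => f p.1 q.1 p.2 q.2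
  map_add' _ _ := rfl
  map_smul' _ _ := rfl

noncomputable def bigKerEquiv :
    LinearMap.ker
        (LinearMap.mulRight ℂ (jordanMatrix n lam) - LinearMap.mulLeft ℂ (jordanMatrix n lam))
      ≃ₗ[ℂ] ((i : Fin l) → (j : Fin l) → LinearMap.ker (Tmap (n i) (n j) lam)) := by
  refine LinearEquiv.ofLinear
    (LinearMap.pi fun i => LinearMap.pi fun j =>
      LinearMap.codRestrict _ ((blockOf n i j).comp (Submodule.subtype _))
        fun X => (mem_ker_big_iff n lam X.1).1 X.2 i j)
    (LinearMap.codRestrict _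
      { toFun := fun f => assemble n fun i j => (f i j : Matrix (Fin (n i)) (Fin (n j)) ℂ)
        map_add' := fun f g => rfl
        map_smul' := fun r f => rfl }
      fun f => (mem_ker_big_iff n lam _).2 fun i j => (f i j).2) ?_ ?_
  · ext f i j
    rfl
  · ext X p q
    obtain ⟨i, a⟩ := p
    obtain ⟨j, b⟩ := q
    rfl

end Blocks

end CentralizerAux

/-- the dimension of the centralizer of a single-eigenvalue Jordan matrix
(= the number of parameters of Arnold's miniversal deformation) is `Σ_{i,j} min(n_i,n_j)`. -/
theorem centralizer_dim_jordan {l : ℕ} (n : Fin l → ℕ) (hmono : Antitone n)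
    (hpos : ∀ i, 1 ≤ n i) (lam : ℂ) :
    Module.finrank ℂ (LinearMap.ker
      (LinearMap.mulRight ℂ (jordanMatrix n lam) - LinearMap.mulLeft ℂ (jordanMatrix n lam))) =
    ∑ i, ∑ j, min (n i) (n j) := by
  rw [(CentralizerAux.bigKerEquiv n lam).finrank_eq]
  rw [Module.finrank_pi_fintype]
  refine Finset.sum_congr rfl fun i _ => ?_
  rw [Module.finrank_pi_fintype]
  exact Finset.sum_congr rfl fun j _ =>
    CentralizerAux.finrank_ker_Tmap _ _ (hpos i) (hpos j) lam
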